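/- Let A ∈ ℝ^{p×n} have unit-norm rows a₁,…,a_p with pairwise inner products |aᵢᵀaⱼ| ≤ μ for i ≠ j. Then for any e ∈ ℝⁿ, min over i of |aᵢᵀe| ≤ ‖e‖₂ · (1 + μ(p−1))/√p. -/
import Mathlib


/-- Co-support detection bound: for p unit-norm rows with pairwise coherence at
most μ, the minimal |correlation| with any vector e is at most
‖e‖₂(1 + μ(p−1))/√p. -/
theorem stmt14 {p n : ℕ} (hp : 0 < p) (A : Matrix (Fin p) (Fin n) ℝ)
    (hrows : ∀ i, ∑ t, (A i t) ^ 2 = 1) (μ : ℝ) (hμ : 0 ≤ μ)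
    (hcoh : ∀ i j : Fin p, i ≠ j → |∑ t, A i t * A j t| ≤ μ)
    (e : Fin n → ℝ) :
    ∃ i : Fin p, |A.mulVec e i| ≤
      Real.sqrt (∑ t, (e t) ^ 2) * (1 + μ * ((p : ℝ) - 1)) / Real.sqrt p := by
  classical
  set c : Fin p → ℝ := A.mulVec e with hc
  have hcdef : ∀ i, c i = ∑ t, A i t * e t := by
    intro i; simp [hc, Matrix.mulVec, dotProduct]
  set E : ℝ := ∑ t, (e t) ^ 2 with hE
  set K : ℝ := 1 + μ * ((p : ℝ) - 1) with hK
  set S : ℝ := ∑ i, (c i) ^ 2 with hS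
  have hE0 : 0 ≤ E := Finset.sum_nonneg fun t _ => sq_nonneg _
  have hp1 : (1 : ℝ) ≤ (p : ℝ) := by exact_mod_cast hp
  have hK1 : (1 : ℝ) ≤ K := by nlinarith
  -- v t = ∑ i c i * A i t
  set v : Fin n → ℝ := fun t => ∑ i, c i * A i t with hv
  have hSv : S = ∑ t, v t * e t := by
    rw [hS]
    have : ∀ i, (c i) ^ 2 = ∑ t, c i * A i t * e t := by
      intro i
      rw [sq]
      nth_rewrite 2 [hcdef i]
      rw [Finset.mul_sum]
      apply Finset.sum_congr rfl
      intro t _; ring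
    rw [Finset.sum_congr rfl fun i _ => this i, Finset.sum_comm]
    apply Finset.sum_congr rfl
    intro t _
    rw [hv, Finset.sum_mul]
  -- Cauchy-Schwarz : S^2 ≤ (∑ v²) * E
  have hCS : S ^ 2 ≤ (∑ t, (v t) ^ 2) * E := by
    rw [hSv, hE]
    exact Finset.sum_mul_sq_le_sq_mul_sq Finset.univ v e
  -- expand ∑ v² as double sum
  have hVexp : (∑ t, (v t) ^ 2) =
      ∑ i, ∑ j, c i * c j * (∑ t, A i t * A j t) := by
    have h1 : ∀ t, (v t) ^ 2 = ∑ i, ∑ j, (c i * A i t) * (c j * A j t) := by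
      intro t
      rw [sq, hv, Finset.sum_mul_sum]
    rw [Finset.sum_congr rfl fun t _ => h1 t, Finset.sum_comm]
    apply Finset.sum_congr rfl
    intro i _
    rw [Finset.sum_comm]
    apply Finset.sum_congr rfl
    intro j _
    rw [Finset.mul_sum]
    apply Finset.sum_congr rfl
    intro t _; ring
  -- bound the double sum
  set T : ℝ := (∑ i, |c i|) ^ 2 with hT
  have hVb : (∑ t, (v t) ^ 2) ≤ μ * T + (1 - μ) * S := by
    rw [hVexp]
    have hterm : ∀ i j : Fin p,
        c i * c j * (∑ t, A i t * A j t) ≤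
        μ * (|c i| * |c j|) + (if i = j then (1 - μ) * (c i)^2 else 0) := by
      intro i j
      by_cases hij : i = j
      · subst hij
        simp only [if_pos, eq_self_iff_true, if_true]
        have : (∑ t, A i t * A i t) = 1 := by
          rw [← hrows i]; apply Finset.sum_congr rfl; intro t _; ring
        rw [this]
        have : |c i| * |c i| = (c i)^2 := by rw [← abs_mul, abs_mul_self, sq]
        nlinarith [this]
      · simp only [if_neg hij]
        have h1 : c i * c j * (∑ t, A i t * A j t) ≤ |c i * c j * (∑ t, A i t * A j t)| :=
          le_abs_self _
        have h2 : |c i * c j * (∑ t, A i t * A j t)| = |c i| * |c j| * |∑ t, A i t * A j t| := by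
          rw [abs_mul, abs_mul]
        have h3 : |c i| * |c j| * |∑ t, A i t * A j t| ≤ |c i| * |c j| * μ := by
          apply mul_le_mul_of_nonneg_left (hcoh i j hij)
          positivity
        nlinarith [h1, h2, h3]
    calc (∑ i, ∑ j, c i * c j * (∑ t, A i t * A j t))
        ≤ ∑ i, ∑ j, (μ * (|c i| * |c j|) + (if i = j then (1 - μ) * (c i)^2 else 0)) := by
          apply Finset.sum_le_sum; intro i _
          apply Finset.sum_le_sum; intro j _
          exact hterm i j
      _ = μ * T + (1 - μ) * S := by
          simp only [Finset.sum_add_distrib, Finset.sum_ite_eq, Finset.mem_univ, if_true]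
          have h1 : μ * T = ∑ i, ∑ j, μ * (|c i| * |c j|) := by
            rw [hT, sq, Finset.sum_mul_sum, Finset.mul_sum]
            exact Finset.sum_congr rfl fun i _ => by rw [Finset.mul_sum]
          have h2 : (1 - μ) * S = ∑ i, (1 - μ) * (c i) ^ 2 := by
            rw [hS, Finset.mul_sum]
          rw [h1, h2]
  -- T ≤ p * S
  have hTS : T ≤ (p : ℝ) * S := by
    rw [hT, hS]
    have h2 := sq_sum_le_card_mul_sum_sq (s := Finset.univ) (f := fun i : Fin p => |c i|)
    simp only [Finset.card_univ, Fintype.card_fin] at h2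
    have h3 : ∀ i, |c i| ^ 2 = (c i) ^ 2 := fun i => sq_abs _
    rw [Finset.sum_congr rfl fun i _ => h3 i] at h2
    linarith [h2]
  have hS0 : 0 ≤ S := Finset.sum_nonneg fun i _ => sq_nonneg _
  -- S ≤ K * E
  have hSKE : S ≤ K * E := by
    have hVKS : (∑ t, (v t) ^ 2) ≤ K * S := by
      have : μ * T ≤ μ * ((p:ℝ) * S) := mul_le_mul_of_nonneg_left hTS hμ
      rw [hK]; nlinarith
    have h1 : S ^ 2 ≤ K * S * E :=
      le_trans hCS (mul_le_mul_of_nonneg_right hVKS hE0)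
    rcases eq_or_lt_of_le hS0 with h | h
    · rw [← h]; positivity
    · nlinarith
  -- choose minimizing i
  obtain ⟨i₀, _, hi₀⟩ := Finset.exists_min_image Finset.univ (fun i => (c i)^2)
    ⟨⟨0, hp⟩, Finset.mem_univ _⟩
  refine ⟨i₀, ?_⟩
  have hpS : (p : ℝ) * (c i₀)^2 ≤ S := by
    rw [hS]
    calc (p : ℝ) * (c i₀)^2 = ∑ _i : Fin p, (c i₀)^2 := by
          simp [Finset.sum_const, Finset.card_univ, mul_comm]
      _ ≤ ∑ i, (c i)^2 := Finset.sum_le_sum fun i _ => hi₀ i (Finset.mem_univ i)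
  have hfin : (c i₀)^2 ≤ K^2 * E / (p : ℝ) := by
    rw [le_div_iff₀ (by positivity : (0:ℝ) < (p:ℝ))]
    nlinarith
  have habs : |c i₀| = Real.sqrt ((c i₀)^2) := (Real.sqrt_sq_eq_abs _).symm
  rw [habs]
  calc Real.sqrt ((c i₀)^2) ≤ Real.sqrt (K^2 * E / (p : ℝ)) := Real.sqrt_le_sqrt hfin
    _ = Real.sqrt E * K / Real.sqrt p := by
        rw [Real.sqrt_div' _ (by positivity), Real.sqrt_mul (by positivity), Real.sqrt_sq (by linarith)]
        ring
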